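/- Let n ≥ 1, let J : ℝ⁴ → Mₙ(ℂ) (coordinates denoted (z, z̃, w, w̃)) be twice continuously differentiable with J(p) invertible for every p, and let K : ℝ⁴ → Mₙ(ℂ) be continuously differentiable. Suppose (J, K) satisfy the Miura transformation ∂_{z̃}K = −(∂_w J)J⁻¹ and ∂_{w̃}K = −(∂_z J)J⁻¹. Then K satisfies the K-matrix form of the self-dual Yang–Mills equation: ∂_z∂_{z̃}K − ∂_w∂_{w̃}K − [∂_{z̃}K, ∂_{w̃}K] = 0, where [A,B] = AB − BA. -/

import Mathlib

open Matrix

/-- Partial derivative of a scalar function on `ℝ⁴` with respect to the `μ`-th coordinate. -/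
noncomputable def pd (μ : Fin 4) (f : (Fin 4 → ℝ) → ℂ) (p : Fin 4 → ℝ) : ℂ :=
  deriv (fun s => f (Function.update p μ s)) (p μ)

lemma hasDerivAt_pd {f : (Fin 4 → ℝ) → ℂ} {p : Fin 4 → ℝ} {μ : Fin 4}
    (hf : DifferentiableAt ℝ f p) :
    HasDerivAt (fun t => f (Function.update p μ t)) (fderiv ℝ f p (Pi.single μ 1)) (p μ) := by
  have h1 := hasDerivAt_update p μ (p μ)
  have h2 : HasFDerivAt f (fderiv ℝ f p) (Function.update p μ (p μ)) := by
    rw [Function.update_eq_self]; exact hf.hasFDerivAt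
  exact h2.comp_hasDerivAt (p μ) h1

lemma pd_eq_fderiv {f : (Fin 4 → ℝ) → ℂ} {p : Fin 4 → ℝ} {μ : Fin 4}
    (hf : DifferentiableAt ℝ f p) :
    pd μ f p = fderiv ℝ f p (Pi.single μ 1) := (hasDerivAt_pd hf).deriv

lemma diffAt_update {f : (Fin 4 → ℝ) → ℂ} {p : Fin 4 → ℝ} {μ : Fin 4}
    (hf : DifferentiableAt ℝ f p) :
    DifferentiableAt ℝ (fun t => f (Function.update p μ t)) (p μ) :=
  (hasDerivAt_pd hf).differentiableAt

lemma pd_neg {μ : Fin 4} (f : (Fin 4 → ℝ) → ℂ) (p : Fin 4 → ℝ) :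
    pd μ (fun q => -f q) p = -pd μ f p := by
  simp [pd, deriv.neg]

lemma pd_mul {f g : (Fin 4 → ℝ) → ℂ} {p : Fin 4 → ℝ} {μ : Fin 4}
    (hf : DifferentiableAt ℝ f p) (hg : DifferentiableAt ℝ g p) :
    pd μ (fun q => f q * g q) p = pd μ f p * g p + f p * pd μ g p := by
  have := deriv_fun_mul (diffAt_update (μ := μ) hf) (diffAt_update (μ := μ) hg)
  simpa [pd, Function.update_eq_self] using this

lemma pd_sum {ι : Type*} (s : Finset ι) {f : ι → (Fin 4 → ℝ) → ℂ} {p : Fin 4 → ℝ} {μ : Fin 4}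
    (hf : ∀ i ∈ s, DifferentiableAt ℝ (f i) p) :
    pd μ (fun q => ∑ i ∈ s, f i q) p = ∑ i ∈ s, pd μ (f i) p := by
  have := deriv_fun_sum (A := fun i => fun t => f i (Function.update p μ t)) (u := s)
    (x := p μ) (fun i hi => diffAt_update (μ := μ) (hf i hi))
  simpa [pd] using this

lemma contDiff_pd {f : (Fin 4 → ℝ) → ℂ} (hf : ContDiff ℝ 2 f) (ν : Fin 4) :
    ContDiff ℝ 1 (fun q => pd ν f q) := by
  have hd : Differentiable ℝ f := hf.differentiable two_ne_zero
  have : (fun q => pd ν f q) = fun q => fderiv ℝ f q (Pi.single ν 1) := by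
    funext q; exact pd_eq_fderiv (hd q)
  rw [this]
  exact (hf.fderiv_right (m := 1) le_rfl).clm_apply contDiff_const

lemma pd_pd_symm {f : (Fin 4 → ℝ) → ℂ} (hf : ContDiff ℝ 2 f) (μ ν : Fin 4) (p : Fin 4 → ℝ) :
    pd μ (fun q => pd ν f q) p = pd ν (fun q => pd μ f q) p := by
  have hd : Differentiable ℝ f := hf.differentiable two_ne_zero
  have hf' : ContDiff ℝ 1 (fderiv ℝ f) := hf.fderiv_right (m := 1) le_rfl
  have hkey : ∀ (a b : Fin 4),
      pd a (fun q => pd b f q) p = fderiv ℝ (fderiv ℝ f) p (Pi.single a 1) (Pi.single b 1) := by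
    intro a b
    have he : (fun q => pd b f q) = fun q => fderiv ℝ f q (Pi.single b 1) := by
      funext q; exact pd_eq_fderiv (hd q)
    rw [he, pd_eq_fderiv (((hf'.differentiable one_ne_zero) p).clm_apply (differentiableAt_const _))]
    rw [fderiv_clm_apply ((hf'.differentiable one_ne_zero) p) (differentiableAt_const _)]
    simp
  rw [hkey, hkey]
  exact second_derivative_symmetric (fun y => (hd y).hasFDerivAt)
    ((hf'.differentiable one_ne_zero) p).hasFDerivAt _ _

/-- Entrywise partial derivative of a matrix-valued function on `ℝ⁴`. -/
noncomputable def pdM {n : ℕ} (μ : Fin 4) (J : (Fin 4 → ℝ) → Matrix (Fin n) (Fin n) ℂ)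
    (p : Fin 4 → ℝ) : Matrix (Fin n) (Fin n) ℂ :=
  Matrix.of fun i j => pd μ (fun q => J q i j) p

lemma pdM_neg {n : ℕ} (μ : Fin 4) (A : (Fin 4 → ℝ) → Matrix (Fin n) (Fin n) ℂ)
    (p : Fin 4 → ℝ) : pdM μ (fun q => -(A q)) p = -pdM μ A p := by
  ext i j
  simpa [pdM] using pd_neg (fun q => A q i j) p

lemma pdM_const {n : ℕ} (μ : Fin 4) (C : Matrix (Fin n) (Fin n) ℂ) (p : Fin 4 → ℝ) :
    pdM μ (fun _ => C) p = 0 := by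
  ext i j
  simp [pdM, pd]

lemma pdM_mul {n : ℕ} {μ : Fin 4} {A B : (Fin 4 → ℝ) → Matrix (Fin n) (Fin n) ℂ}
    {p : Fin 4 → ℝ}
    (hA : ∀ i j, DifferentiableAt ℝ (fun q => A q i j) p)
    (hB : ∀ i j, DifferentiableAt ℝ (fun q => B q i j) p) :
    pdM μ (fun q => A q * B q) p = pdM μ A p * B p + A p * pdM μ B p := by
  ext i j
  have h1 : (fun q => (A q * B q) i j) = fun q => ∑ k, A q i k * B q k j := by
    funext q; simp [Matrix.mul_apply]
  have h2 : pd μ (fun q => (A q * B q) i j) p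
      = ∑ k, (pd μ (fun q => A q i k) p * B p k j + A p i k * pd μ (fun q => B q k j) p) := by
    rw [h1, pd_sum (f := fun k q => A q i k * B q k j) Finset.univ (fun k _ => ((hA i k).mul (hB k j)))]
    exact Finset.sum_congr rfl fun k _ => pd_mul (hA i k) (hB k j)
  simp only [pdM, Matrix.add_apply, Matrix.mul_apply, Matrix.of_apply]
  rw [← h1, h2, Finset.sum_add_distrib]

lemma contDiff_det_of_entries {n : ℕ} {M : (Fin 4 → ℝ) → Matrix (Fin n) (Fin n) ℂ}
    (hM : ∀ i j, ContDiff ℝ 2 fun q => M q i j) :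
    ContDiff ℝ 2 fun q => (M q).det := by
  have : (fun q => (M q).det)
      = fun q => ∑ σ : Equiv.Perm (Fin n), (Equiv.Perm.sign σ : ℂ) * ∏ i, M q (σ i) i := by
    funext q; rw [Matrix.det_apply']
  rw [this]
  apply ContDiff.sum
  intro σ _
  exact contDiff_const.mul (contDiff_prod fun i _ => hM (σ i) i)

lemma contDiff_inv_entry {n : ℕ} {J : (Fin 4 → ℝ) → Matrix (Fin n) (Fin n) ℂ}
    (hJ : ∀ i j, ContDiff ℝ 2 fun q => J q i j)
    (hJunit : ∀ p, IsUnit (J p)) (i j : Fin n) :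
    ContDiff ℝ 1 fun q => (J q)⁻¹ i j := by
  have hdet : ContDiff ℝ 2 fun q => (J q).det := contDiff_det_of_entries hJ
  have hdet0 : ∀ q, (J q).det ≠ 0 := fun q =>
    IsUnit.ne_zero ((Matrix.isUnit_iff_isUnit_det _).mp (hJunit q))
  have hadj : ContDiff ℝ 2 fun q => (J q).adjugate i j := by
    have : (fun q => (J q).adjugate i j)
        = fun q => ((J q).updateRow j (Pi.single i 1)).det := by
      funext q; rw [Matrix.adjugate_apply]
    rw [this]
    apply contDiff_det_of_entries
    intro k l
    rcases eq_or_ne k j with rfl | hk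
    · simp only [Matrix.updateRow_self]
      exact contDiff_const
    · simp only [Matrix.updateRow_ne hk]
      exact hJ k l
  have : (fun q => (J q)⁻¹ i j) = fun q => ((J q).det)⁻¹ * (J q).adjugate i j := by
    funext q
    rw [Matrix.inv_def]
    simp [Ring.inverse_eq_inv']
  rw [this]
  exact (((hdet.of_le one_le_two).inv hdet0).mul (hadj.of_le one_le_two))

lemma pdM_inv {n : ℕ} {J : (Fin 4 → ℝ) → Matrix (Fin n) (Fin n) ℂ}
    (hJ : ∀ i j, ContDiff ℝ 2 fun q => J q i j)
    (hJunit : ∀ p, IsUnit (J p)) (μ : Fin 4) (p : Fin 4 → ℝ) :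
    pdM μ (fun q => (J q)⁻¹) p = -((J p)⁻¹ * (pdM μ J p * (J p)⁻¹)) := by
  have hdetu : ∀ q, IsUnit (J q).det := fun q => (Matrix.isUnit_iff_isUnit_det _).mp (hJunit q)
  have h1 : (fun q => J q * (J q)⁻¹) = fun _ => (1 : Matrix (Fin n) (Fin n) ℂ) := by
    funext q; exact Matrix.mul_nonsing_inv _ (hdetu q)
  have hJd : ∀ i j, DifferentiableAt ℝ (fun q => J q i j) p :=
    fun i j => ((hJ i j).differentiable two_ne_zero) p
  have hGd : ∀ i j, DifferentiableAt ℝ (fun q => (J q)⁻¹ i j) p :=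
    fun i j => ((contDiff_inv_entry hJ hJunit i j).differentiable one_ne_zero) p
  have h2 := pdM_mul (μ := μ) (p := p) hJd hGd
  rw [h1, pdM_const] at h2
  have h3 : J p * pdM μ (fun q => (J q)⁻¹) p = -(pdM μ J p * (J p)⁻¹) := by
    linear_combination (norm := module) -h2
  calc pdM μ (fun q => (J q)⁻¹) p
      = (J p)⁻¹ * (J p * pdM μ (fun q => (J q)⁻¹) p) := by
        rw [← Matrix.mul_assoc, Matrix.nonsing_inv_mul _ (hdetu p), Matrix.one_mul]
    _ = -((J p)⁻¹ * (pdM μ J p * (J p)⁻¹)) := by rw [h3, Matrix.mul_neg]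

/-- coordinates (z, z̃, w, w̃) = (0, 1, 2, 3).  If `(J, K)` satisfy the Miura
transformation `∂_z̃ K = −(∂_w J)J⁻¹`, `∂_w̃ K = −(∂_z J)J⁻¹`, then `K` satisfies the
K-matrix form of the SDYM equation
`∂_z ∂_z̃ K − ∂_w ∂_w̃ K − [∂_z̃ K, ∂_w̃ K] = 0`. -/
theorem sdym_K_from_miura {n : ℕ} (hn : 1 ≤ n)
    (J K : (Fin 4 → ℝ) → Matrix (Fin n) (Fin n) ℂ)
    (hJ : ∀ i j, ContDiff ℝ 2 fun p => J p i j)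
    (hJunit : ∀ p, IsUnit (J p))
    (hK : ∀ i j, ContDiff ℝ 1 fun p => K p i j)
    (hMiura1 : ∀ p, pdM 1 K p = -(pdM 2 J p * (J p)⁻¹))
    (hMiura2 : ∀ p, pdM 3 K p = -(pdM 0 J p * (J p)⁻¹)) :
    ∀ p, pdM 0 (fun q => pdM 1 K q) p - pdM 2 (fun q => pdM 3 K q) p
        - (pdM 1 K p * pdM 3 K p - pdM 3 K p * pdM 1 K p) = 0 := by
  intro p
  have hJd : ∀ (ν : Fin 4) i j, DifferentiableAt ℝ (fun q => pdM ν J q i j) p := by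
    intro ν i j
    have : (fun q => pdM ν J q i j) = fun q => pd ν (fun r => J r i j) q := rfl
    rw [this]
    exact ((contDiff_pd (hJ i j) ν).differentiable one_ne_zero) p
  have hGd : ∀ i j, DifferentiableAt ℝ (fun q => (J q)⁻¹ i j) p :=
    fun i j => ((contDiff_inv_entry hJ hJunit i j).differentiable one_ne_zero) p
  -- rewrite the second-derivative terms
  have e1 : (fun q => pdM 1 K q) = fun q => -(pdM 2 J q * (J q)⁻¹) := funext hMiura1
  have e2 : (fun q => pdM 3 K q) = fun q => -(pdM 0 J q * (J q)⁻¹) := funext hMiura2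
  have d1 : pdM 0 (fun q => pdM 1 K q) p
      = -(pdM 0 (fun q => pdM 2 J q) p * (J p)⁻¹
          + pdM 2 J p * (-((J p)⁻¹ * (pdM 0 J p * (J p)⁻¹)))) := by
    rw [e1, pdM_neg, pdM_mul (hJd 2) hGd, pdM_inv hJ hJunit]
  have d2 : pdM 2 (fun q => pdM 3 K q) p
      = -(pdM 2 (fun q => pdM 0 J q) p * (J p)⁻¹
          + pdM 0 J p * (-((J p)⁻¹ * (pdM 2 J p * (J p)⁻¹)))) := by
    rw [e2, pdM_neg, pdM_mul (hJd 0) hGd, pdM_inv hJ hJunit]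
  have clair : pdM 0 (fun q => pdM 2 J q) p = pdM 2 (fun q => pdM 0 J q) p := by
    ext i j
    exact pd_pd_symm (hJ i j) 0 2 p
  rw [d1, d2, clair, hMiura1, hMiura2]
  noncomm_ring
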